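/- Let T = {(x,y) ∈ ℝ² : x ≥ 0, y ≥ 0, x + y ≤ 1} be the standard reference triangle and let b(x,y) = 27·x·y·(1 − x − y). For every natural number m there exists a constant C > 0 such that for every point x₀ ∈ T and every real polynomial p in two variables of total degree at most m, ∫_T p(x)² dx ≤ C · ∫_T ‖x − x₀‖⁴ · b(x)² · p(x)² dx, with C independent of x₀. -/

import Mathlib

open MeasureTheory Real MvPolynomial

/-- The standard reference triangle `T = {(x,y) : x ≥ 0, y ≥ 0, x + y ≤ 1}` in ℝ². -/
def T : Set (EuclideanSpace ℝ (Fin 2)) := {x | 0 ≤ x 0 ∧ 0 ≤ x 1 ∧ x 0 + x 1 ≤ 1}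

/-- The reference element bubble function `b(x,y) = 27·x·y·(1 − x − y)`. -/
noncomputable def bub (x : EuclideanSpace ℝ (Fin 2)) : ℝ :=
  27 * x 0 * x 1 * (1 - x 0 - x 1)

noncomputable section
abbrev E2 := EuclideanSpace ℝ (Fin 2)

lemma analytic_eval (p : MvPolynomial (Fin 2) ℝ) :
    AnalyticOnNhd ℝ (fun x : E2 => eval (fun i => x i) p) Set.univ := by
  induction p using MvPolynomial.induction_on with
  | C a => simpa using analyticOnNhd_const
  | add p q hp hq => simp only [eval_add]; exact hp.add hq
  | mul_X p i hp =>
      simp only [eval_mul, eval_X]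
      exact hp.mul ((EuclideanSpace.proj i : E2 →L[ℝ] ℝ).analyticOnNhd _)

lemma cont_eval (p : MvPolynomial (Fin 2) ℝ) :
    Continuous fun x : E2 => eval (fun i => x i) p := by
  have := (analytic_eval p).continuousOn
  rwa [← continuousOn_univ]

lemma cont_coord (i : Fin 2) : Continuous fun x : E2 => x i :=
  (EuclideanSpace.proj i : E2 →L[ℝ] ℝ).continuous

lemma cont_bub : Continuous bub := by
  unfold bub
  exact (((continuous_const.mul (cont_coord 0)).mul (cont_coord 1)).mul
    ((continuous_const.sub (cont_coord 0)).sub (cont_coord 1)))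

lemma abs_coord (x : E2) (i : Fin 2) : |x i| ≤ ‖x‖ := by
  rw [EuclideanSpace.norm_eq]
  have h1 : |x i| = Real.sqrt (‖x i‖^2) := by
    rw [Real.sqrt_sq_eq_abs]; simp
  rw [h1]
  apply Real.sqrt_le_sqrt
  exact Finset.single_le_sum (f := fun j => ‖x j‖^2) (fun j _ => by positivity) (Finset.mem_univ i)


lemma T_isClosed : IsClosed T := by
  have : T = (fun x : E2 => x 0) ⁻¹' (Set.Ici 0) ∩ ((fun x : E2 => x 1) ⁻¹' (Set.Ici 0) ∩ ((fun x : E2 => x 0 + x 1) ⁻¹' (Set.Iic 1))) := by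
    ext x; simp [T, Set.mem_setOf_eq]
  rw [this]
  exact (isClosed_Ici.preimage (cont_coord 0)).inter ((isClosed_Ici.preimage (cont_coord 1)).inter
    (isClosed_Iic.preimage ((cont_coord 0).add (cont_coord 1))))

lemma T_isCompact : IsCompact T := by
  apply (isCompact_closedBall (0 : E2) 2).of_isClosed_subset T_isClosed
  intro x hx
  obtain ⟨h0, h1, hs⟩ := hx
  have a0 := abs_coord x 0
  have a1 := abs_coord x 1
  simp only [Metric.mem_closedBall, dist_zero_right]
  rw [EuclideanSpace.norm_eq]
  have : Real.sqrt (∑ i, ‖x i‖^2) ≤ Real.sqrt 4 := by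
    apply Real.sqrt_le_sqrt
    rw [Fin.sum_univ_two]
    have b0 : |x 0| ≤ 1 := by rw [abs_of_nonneg h0]; linarith
    have b1 : |x 1| ≤ 1 := by rw [abs_of_nonneg h1]; linarith
    rw [Real.norm_eq_abs, Real.norm_eq_abs]
    nlinarith [abs_nonneg (x 0), abs_nonneg (x 1)]
  calc Real.sqrt (∑ i, ‖x i‖^2) ≤ Real.sqrt 4 := this
    _ ≤ 2 := by rw [show (4:ℝ) = 2^2 by norm_num, Real.sqrt_sq]; norm_num

lemma poly_zero_of_ball {p : MvPolynomial (Fin 2) ℝ} {a : E2} {r : ℝ} (hr : 0 < r)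
    (h : ∀ x ∈ Metric.ball a r, eval (fun i => x i) p = 0) : p = 0 := by
  have hz : Set.EqOn (fun x : E2 => eval (fun i => x i) p) 0 Set.univ := by
    apply (analytic_eval p).eqOn_zero_of_preconnected_of_eventuallyEq_zero
      isPreconnected_univ (Set.mem_univ a)
    filter_upwards [Metric.ball_mem_nhds a hr] with x hx
    exact h x hx
  apply MvPolynomial.funext
  intro x
  have := hz (Set.mem_univ ((WithLp.equiv 2 (Fin 2 → ℝ)).symm x))
  simpa using this
abbrev Idx (m : ℕ) := Fin (m+1) × Fin (m+1)

def expo (m : ℕ) (k : Idx m) : Fin 2 →₀ ℕ :=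
  Finsupp.single 0 (k.1 : ℕ) + Finsupp.single 1 (k.2 : ℕ)

def Pc (m : ℕ) (c : Idx m → ℝ) : MvPolynomial (Fin 2) ℝ :=
  ∑ k, c k • (X 0 ^ (k.1 : ℕ) * X 1 ^ (k.2 : ℕ))

lemma fin2_eq (d : Fin 2 →₀ ℕ) :
    Finsupp.single 0 (d 0) + Finsupp.single 1 (d 1) = d := by
  ext i
  fin_cases i <;> simp [Finsupp.single_apply]

lemma expo_apply0 (m : ℕ) (k : Idx m) : (expo m k) 0 = (k.1 : ℕ) := by
  simp [expo, Finsupp.single_apply]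

lemma expo_apply1 (m : ℕ) (k : Idx m) : (expo m k) 1 = (k.2 : ℕ) := by
  simp [expo, Finsupp.single_apply]

lemma expo_inj (m : ℕ) : Function.Injective (expo m) := by
  intro k l h
  have h0 := congrArg (fun f => f 0) h
  have h1 := congrArg (fun f => f 1) h
  simp only [expo_apply0, expo_apply1] at h0 h1
  ext
  · exact h0
  · exact h1

lemma coeff_Pc (m : ℕ) (c : Idx m → ℝ) (d : Fin 2 →₀ ℕ) :
    coeff d (Pc m c) = ∑ k : Idx m, if expo m k = d then c k else 0 := by
  unfold Pc
  rw [coeff_sum]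
  apply Finset.sum_congr rfl
  intro k _
  rw [X_pow_eq_monomial, X_pow_eq_monomial, monomial_mul, mul_one, coeff_smul, coeff_monomial]
  simp [expo, smul_eq_mul, mul_ite, mul_one, mul_zero]
  congr 1

lemma coeff_Pc_expo (m : ℕ) (c : Idx m → ℝ) (k : Idx m) :
    coeff (expo m k) (Pc m c) = c k := by
  rw [coeff_Pc, Finset.sum_eq_single k]
  · rw [if_pos rfl]
  · intro l _ hne; rw [if_neg (fun h => hne (expo_inj m h))]
  · intro h; exact absurd (Finset.mem_univ k) h

lemma Pc_surj (m : ℕ) (p : MvPolynomial (Fin 2) ℝ) (hp : p.totalDegree ≤ m) :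
    Pc m (fun k => coeff (expo m k) p) = p := by
  apply MvPolynomial.ext
  intro d
  by_cases hd : d 0 ≤ m ∧ d 1 ≤ m
  · obtain ⟨h0, h1⟩ := hd
    set k0 : Idx m := (⟨d 0, Nat.lt_succ_of_le h0⟩, ⟨d 1, Nat.lt_succ_of_le h1⟩) with hk0
    have he : expo m k0 = d := by
      simp only [expo, hk0]
      exact fin2_eq d
    rw [← he, coeff_Pc_expo]
  · have hdp : coeff d p = 0 := by
      by_contra hne
      have hmem : d ∈ p.support := by rwa [MvPolynomial.mem_support_iff]
      rcases not_and_or.mp hd with h | h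
      · exact h (le_trans (le_trans (MvPolynomial.monomial_le_degreeOf 0 hmem)
          (MvPolynomial.degreeOf_le_totalDegree p 0)) hp)
      · exact h (le_trans (le_trans (MvPolynomial.monomial_le_degreeOf 1 hmem)
          (MvPolynomial.degreeOf_le_totalDegree p 1)) hp)
    rw [hdp, coeff_Pc]
    apply Finset.sum_eq_zero
    intro k _
    rw [if_neg]
    intro he
    rcases not_and_or.mp hd with h | h
    · exact h (by rw [← he, expo_apply0]; exact Nat.le_of_lt_succ k.1.isLt)
    · exact h (by rw [← he, expo_apply1]; exact Nat.le_of_lt_succ k.2.isLt)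

lemma eval_Pc (m : ℕ) (c : Idx m → ℝ) (x : E2) :
    eval (fun i => x i) (Pc m c) = ∑ k : Idx m, c k * ((x 0) ^ (k.1 : ℕ) * (x 1) ^ (k.2 : ℕ)) := by
  unfold Pc
  rw [map_sum]
  apply Finset.sum_congr rfl
  intro k _
  rw [smul_eval, eval_mul, eval_pow, eval_pow, eval_X, eval_X]

abbrev Coef (m : ℕ) := EuclideanSpace ℝ (Idx m)

def monInt (m : ℕ) (S : Set E2) (k l : Idx m) : ℝ :=
  ∫ x in S, (x 0) ^ ((k.1 : ℕ) + (l.1 : ℕ)) * (x 1) ^ ((k.2 : ℕ) + (l.2 : ℕ))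

lemma cont_mono (n₁ n₂ : ℕ) : Continuous fun x : E2 => (x 0) ^ n₁ * (x 1) ^ n₂ :=
  ((cont_coord 0).pow n₁).mul ((cont_coord 1).pow n₂)

lemma integrableOn_T {f : E2 → ℝ} (hf : Continuous f) : IntegrableOn f T :=
  hf.continuousOn.integrableOn_compact T_isCompact

lemma integrableOn_ball {f : E2 → ℝ} (hf : Continuous f) (a : E2) (r : ℝ) :
    IntegrableOn f (Metric.ball a r) :=
  (hf.continuousOn.integrableOn_compact (isCompact_closedBall a r)).mono_set
    Metric.ball_subset_closedBall

lemma sq_eval_Pc (m : ℕ) (c : Idx m → ℝ) (x : E2) :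
    (eval (fun i => x i) (Pc m c)) ^ 2 =
      ∑ k : Idx m, ∑ l : Idx m,
        (c k * c l) * ((x 0) ^ ((k.1 : ℕ) + (l.1 : ℕ)) * (x 1) ^ ((k.2 : ℕ) + (l.2 : ℕ))) := by
  rw [eval_Pc, sq, Finset.sum_mul_sum]
  apply Finset.sum_congr rfl; intro k _
  apply Finset.sum_congr rfl; intro l _
  rw [pow_add, pow_add]; ring

lemma integral_sq_Pc (m : ℕ) {S : Set E2}
    (hS : ∀ n₁ n₂ : ℕ, IntegrableOn (fun x : E2 => (x 0) ^ n₁ * (x 1) ^ n₂) S)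
    (c : Idx m → ℝ) :
    ∫ x in S, (eval (fun i => x i) (Pc m c)) ^ 2
      = ∑ k : Idx m, ∑ l : Idx m, (c k * c l) * monInt m S k l := by
  simp only [sq_eval_Pc m c]
  rw [integral_finset_sum]
  · apply Finset.sum_congr rfl; intro k _
    rw [integral_finset_sum]
    · apply Finset.sum_congr rfl; intro l _
      rw [integral_const_mul]
      rfl
    · intro l _; exact (hS _ _).const_mul _
  · intro k _
    apply integrable_finset_sum
    intro l _; exact (hS _ _).const_mul _

lemma quad_smul (m : ℕ) (A : Idx m → Idx m → ℝ) (t : ℝ) (c : Coef m) :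
    ∑ k : Idx m, ∑ l : Idx m, ((t • c) k * (t • c) l) * A k l
      = t ^ 2 * ∑ k : Idx m, ∑ l : Idx m, (c k * c l) * A k l := by
  rw [Finset.mul_sum]
  apply Finset.sum_congr rfl; intro k _
  rw [Finset.mul_sum]
  apply Finset.sum_congr rfl; intro l _
  simp only [PiLp.smul_apply, smul_eq_mul]
  ring

lemma zero_on_ball_of_integral_zero {f : E2 → ℝ} (hf : Continuous f) {a : E2} {r : ℝ}
    (h0 : ∫ x in Metric.ball a r, (f x) ^ 2 = 0) :
    ∀ x ∈ Metric.ball a r, f x = 0 := by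
  have hint : IntegrableOn (fun x => (f x) ^ 2) (Metric.ball a r) :=
    integrableOn_ball (hf.pow 2) a r
  have hae : (fun x => (f x) ^ 2) =ᵐ[volume.restrict (Metric.ball a r)] 0 :=
    (integral_eq_zero_iff_of_nonneg (fun x => sq_nonneg (f x)) hint).mp h0
  have hae2 : ∀ᵐ x ∂(volume.restrict (Metric.ball a r)), (f x) ^ 2 = 0 :=
    hae.mono fun x hx => by simpa using hx
  rw [ae_restrict_iff' measurableSet_ball] at hae2
  rw [ae_iff] at hae2
  have hae' := hae2
  set U := Metric.ball a r ∩ {x : E2 | f x ≠ 0} with hU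
  have hUopen : IsOpen U :=
    Metric.isOpen_ball.inter (isOpen_compl_iff.mpr (isClosed_singleton.preimage hf))
  have hU0 : volume U = 0 := by
    apply measure_mono_null _ hae'
    intro x hx
    simp only [Set.mem_setOf_eq, Classical.not_imp]
    exact ⟨hx.1, pow_ne_zero 2 hx.2⟩
  have hUe : U = ∅ := hUopen.eq_empty_of_measure_zero hU0
  intro x hx
  by_contra hne
  have : x ∈ U := ⟨hx, hne⟩
  rw [hUe] at this
  exact this

lemma lemA (m : ℕ) (a : E2) (r : ℝ) (hr : 0 < r) :
    ∃ c > 0, ∀ p : MvPolynomial (Fin 2) ℝ, p.totalDegree ≤ m →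
      (∫ x in T, (eval (fun i => x i) p) ^ 2)
        ≤ c * ∫ x in Metric.ball a r, (eval (fun i => x i) p) ^ 2 := by
  classical
  set B := Metric.ball a r with hB
  have hBint : ∀ n₁ n₂ : ℕ, IntegrableOn (fun x : E2 => (x 0) ^ n₁ * (x 1) ^ n₂) B :=
    fun n₁ n₂ => integrableOn_ball (cont_mono n₁ n₂) a r
  have hTint : ∀ n₁ n₂ : ℕ, IntegrableOn (fun x : E2 => (x 0) ^ n₁ * (x 1) ^ n₂) T :=
    fun n₁ n₂ => integrableOn_T (cont_mono n₁ n₂)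
  set F : Coef m → ℝ := fun c => ∑ k : Idx m, ∑ l : Idx m, (c k * c l) * monInt m B k l with hF
  set G : Coef m → ℝ := fun c => ∑ k : Idx m, ∑ l : Idx m, (c k * c l) * monInt m T k l with hG
  have hFeq : ∀ c : Coef m, F c = ∫ x in B, (eval (fun i => x i) (Pc m c)) ^ 2 :=
    fun c => (integral_sq_Pc m hBint c).symm
  have hGeq : ∀ c : Coef m, G c = ∫ x in T, (eval (fun i => x i) (Pc m c)) ^ 2 :=
    fun c => (integral_sq_Pc m hTint c).symm
  have hcont : ∀ A : Idx m → Idx m → ℝ,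
      Continuous (fun c : Coef m => ∑ k : Idx m, ∑ l : Idx m, (c k * c l) * A k l) := by
    intro A
    apply continuous_finset_sum; intro k _
    apply continuous_finset_sum; intro l _
    exact (((EuclideanSpace.proj k : Coef m →L[ℝ] ℝ).continuous).mul ((EuclideanSpace.proj l : Coef m →L[ℝ] ℝ).continuous)).mul continuous_const
  have hFnn : ∀ c : Coef m, 0 ≤ F c := fun c => by
    rw [hFeq c]
    exact setIntegral_nonneg measurableSet_ball fun x _ => sq_nonneg _
  have hGnn : ∀ c : Coef m, 0 ≤ G c := fun c => by
    rw [hGeq c]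
    exact setIntegral_nonneg T_isClosed.measurableSet fun x _ => sq_nonneg _
  have hne : (Metric.sphere (0 : Coef m) 1).Nonempty :=
    NormedSpace.sphere_nonempty.mpr zero_le_one
  obtain ⟨u₀, hu₀mem, hu₀min⟩ :=
    (isCompact_sphere (0 : Coef m) 1).exists_isMinOn hne (hcont _).continuousOn
  obtain ⟨v₀, hv₀mem, hv₀max⟩ :=
    (isCompact_sphere (0 : Coef m) 1).exists_isMaxOn hne (hcont _).continuousOn
  set ε := F u₀ with hε'
  set M := G v₀ with hM'
  have hε : 0 < ε := by
    rcases (hFnn u₀).lt_or_eq with h | h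
    · exact h
    · exfalso
      have h0 : ∫ x in B, (eval (fun i => x i) (Pc m u₀)) ^ 2 = 0 := by
        rw [← hFeq]; exact h.symm
      have hz := zero_on_ball_of_integral_zero (cont_eval (Pc m u₀)) h0
      have hP0 : Pc m u₀ = 0 := poly_zero_of_ball hr hz
      have hzero : u₀ = 0 := by
        ext k
        have := coeff_Pc_expo m u₀ k
        rw [hP0] at this
        simpa using this.symm
      have : ‖u₀‖ = 1 := by simpa using hu₀mem
      rw [hzero] at this
      simp at this
  have hM0 : 0 ≤ M := le_trans (hGnn v₀) le_rfl
  refine ⟨max (M / ε) 1, lt_of_lt_of_le one_pos (le_max_right _ _), ?_⟩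
  intro p hp
  set c : Coef m := WithLp.toLp 2 (fun k => coeff (expo m k) p : Idx m → ℝ) with hc'
  have hpc : Pc m c = p := Pc_surj m p hp
  have hTp : ∫ x in T, (eval (fun i => x i) p) ^ 2 = G c := by rw [hGeq, hpc]
  have hBp : ∫ x in B, (eval (fun i => x i) p) ^ 2 = F c := by rw [hFeq, hpc]
  rw [hTp, hBp]
  by_cases hc0 : c = 0
  · rw [hc0]
    have hFz : F (0 : Coef m) = 0 := by simp [hF]
    have hGz : G (0 : Coef m) = 0 := by simp [hG]
    rw [hFz, hGz, mul_zero]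
  · have hnc : ‖c‖ ≠ 0 := norm_ne_zero_iff.mpr hc0
    set u : Coef m := ‖c‖⁻¹ • c with hu'
    have hu1 : ‖u‖ = 1 := norm_smul_inv_norm hc0
    have hcu : c = ‖c‖ • u := (smul_inv_smul₀ hnc c).symm
    have hGc : G c = ‖c‖ ^ 2 * G u := by
      conv_lhs => rw [hcu]
      exact quad_smul m _ ‖c‖ u
    have hFc : F c = ‖c‖ ^ 2 * F u := by
      conv_lhs => rw [hcu]
      exact quad_smul m _ ‖c‖ u
    have humem : u ∈ Metric.sphere (0 : Coef m) 1 := by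
      simpa [mem_sphere_zero_iff_norm] using hu1
    have h1 : G u ≤ M := hv₀max humem
    have h2 : ε ≤ F u := hu₀min humem
    have hFcnn : 0 ≤ F u := hFnn u
    have key : G c ≤ (M / ε) * F c := by
      rw [hGc, hFc]
      rw [div_mul_eq_mul_div, le_div_iff₀ hε]
      have e1 : G u * ε ≤ M * F u := by nlinarith
      nlinarith [mul_le_mul_of_nonneg_left e1 (sq_nonneg ‖c‖)]
    calc G c ≤ (M / ε) * F c := key
      _ ≤ max (M / ε) 1 * F c := by
          apply mul_le_mul_of_nonneg_right (le_max_left _ _)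
          rw [hFc]; exact mul_nonneg (sq_nonneg _) hFcnn

def pa1 : E2 := (WithLp.equiv 2 (Fin 2 → ℝ)).symm ![1/4, 1/4]
def pa2 : E2 := (WithLp.equiv 2 (Fin 2 → ℝ)).symm ![1/2, 1/4]

lemma pa1_0 : pa1 0 = 1/4 := rfl
lemma pa1_1 : pa1 1 = 1/4 := rfl
lemma pa2_0 : pa2 0 = 1/2 := rfl
lemma pa2_1 : pa2 1 = 1/4 := rfl

lemma coord_close (x aa : E2) (i : Fin 2) : |x i - aa i| ≤ dist x aa := by
  have h := abs_coord (x - aa) i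
  rw [dist_eq_norm]
  simpa [PiLp.sub_apply] using h

lemma dist_pa : dist pa1 pa2 = 1/4 := by
  rw [EuclideanSpace.dist_eq, Fin.sum_univ_two, pa1_0, pa1_1, pa2_0, pa2_1]
  have e : dist (1/4:ℝ) (1/2) ^ 2 + dist (1/4:ℝ) (1/4) ^ 2 = (1/4:ℝ)^2 := by
    rw [Real.dist_eq, Real.dist_eq, show (1/4-1/2:ℝ) = -(1/4) by norm_num, abs_neg, sub_self,
      abs_zero, abs_of_nonneg (by norm_num : (0:ℝ) ≤ 1/4)]
    norm_num
  rw [e, Real.sqrt_sq (by norm_num)]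

lemma choice_pa (x₀ : E2) : 1/8 ≤ dist pa1 x₀ ∨ 1/8 ≤ dist pa2 x₀ := by
  by_contra h
  push_neg at h
  obtain ⟨h1, h2⟩ := h
  have := dist_triangle pa1 x₀ pa2
  rw [dist_pa, dist_comm x₀ pa2] at this
  linarith

lemma ball1_sub : Metric.ball pa1 (1/16) ⊆ T := by
  intro x hx
  rw [Metric.mem_ball] at hx
  have h0 := coord_close x pa1 0
  have h1 := coord_close x pa1 1
  rw [pa1_0] at h0; rw [pa1_1] at h1
  rw [abs_le] at h0 h1  -- gives ≤ dist; combine with hx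
  constructor
  · linarith [h0.1, hx]
  constructor
  · linarith [h1.1, hx]
  · linarith [h0.2, h1.2, hx]

lemma ball2_sub : Metric.ball pa2 (1/16) ⊆ T := by
  intro x hx
  rw [Metric.mem_ball] at hx
  have h0 := coord_close x pa2 0
  have h1 := coord_close x pa2 1
  rw [pa2_0] at h0; rw [pa2_1] at h1
  rw [abs_le] at h0 h1
  refine ⟨by linarith [h0.1], by linarith [h1.1], by linarith [h0.2, h1.2]⟩

lemma bub1_lb : ∀ x ∈ Metric.ball pa1 (1/16), 486/4096 ≤ bub x := by
  intro x hx
  rw [Metric.mem_ball] at hx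
  have h0 := coord_close x pa1 0
  have h1 := coord_close x pa1 1
  rw [pa1_0] at h0; rw [pa1_1] at h1
  rw [abs_le] at h0 h1
  unfold bub
  have b1 : (3:ℝ)/16 ≤ x 0 := by linarith [h0.1]
  have b2 : x 0 ≤ (5:ℝ)/16 := by linarith [h0.2]
  have b3 : (3:ℝ)/16 ≤ x 1 := by linarith [h1.1]
  have b4 : x 1 ≤ (5:ℝ)/16 := by linarith [h1.2]
  have bz : (6:ℝ)/16 ≤ 1 - x 0 - x 1 := by linarith
  have q1 : (3/16:ℝ)*(3/16) ≤ x 0 * x 1 := by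
    nlinarith [mul_nonneg (by linarith : (0:ℝ) ≤ x 0 - 3/16) (by linarith : (0:ℝ) ≤ x 1 - 3/16)]
  have q2 : (3/16:ℝ)*(3/16)*(6/16) ≤ x 0 * x 1 * (1 - x 0 - x 1) :=
    mul_le_mul q1 bz (by norm_num) (by nlinarith)
  nlinarith [q2]

lemma bub2_lb : ∀ x ∈ Metric.ball pa2 (1/16), 486/4096 ≤ bub x := by
  intro x hx
  rw [Metric.mem_ball] at hx
  have h0 := coord_close x pa2 0
  have h1 := coord_close x pa2 1
  rw [pa2_0] at h0; rw [pa2_1] at h1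
  rw [abs_le] at h0 h1
  unfold bub
  have b1 : (7:ℝ)/16 ≤ x 0 := by linarith [h0.1]
  have b2 : x 0 ≤ (9:ℝ)/16 := by linarith [h0.2]
  have b3 : (3:ℝ)/16 ≤ x 1 := by linarith [h1.1]
  have b4 : x 1 ≤ (5:ℝ)/16 := by linarith [h1.2]
  have bz : (2:ℝ)/16 ≤ 1 - x 0 - x 1 := by linarith
  have q1 : (7/16:ℝ)*(3/16) ≤ x 0 * x 1 := by
    nlinarith [mul_nonneg (by linarith : (0:ℝ) ≤ x 0 - 7/16) (by linarith : (0:ℝ) ≤ x 1 - 3/16)]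
  have q2 : (7/16:ℝ)*(3/16)*(2/16) ≤ x 0 * x 1 * (1 - x 0 - x 1) :=
    mul_le_mul q1 bz (by norm_num) (by nlinarith)
  nlinarith [q2]

lemma main_aux (m : ℕ) (aa : E2) (c : ℝ) (hc : 0 < c)
    (hball : Metric.ball aa (1/16) ⊆ T)
    (hbub : ∀ x ∈ Metric.ball aa (1/16), 486/4096 ≤ bub x)
    (hA : ∀ p : MvPolynomial (Fin 2) ℝ, p.totalDegree ≤ m →
      (∫ x in T, (eval (fun i => x i) p) ^ 2)
        ≤ c * ∫ x in Metric.ball aa (1/16), (eval (fun i => x i) p) ^ 2)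
    (x₀ : E2) (hx₀ : 1/8 ≤ dist aa x₀)
    (p : MvPolynomial (Fin 2) ℝ) (hp : p.totalDegree ≤ m) :
    (∫ x in T, (eval (fun i => x i) p) ^ 2) ≤
      (c / ((1/16 : ℝ)^4 * (486/4096)^2)) *
        ∫ x in T, ‖x - x₀‖ ^ 4 * (bub x) ^ 2 * (eval (fun i => x i) p) ^ 2 := by
  set B := Metric.ball aa (1/16) with hB
  set w : ℝ := (1/16 : ℝ)^4 * (486/4096)^2 with hw
  have hw0 : 0 < w := by norm_num [hw]
  set f : E2 → ℝ := fun x => (eval (fun i => x i) p) ^ 2 with hf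
  set g : E2 → ℝ := fun x => ‖x - x₀‖ ^ 4 * (bub x) ^ 2 * (eval (fun i => x i) p) ^ 2 with hg
  have hfcont : Continuous f := (cont_eval p).pow 2
  have hgcont : Continuous g :=
    ((((continuous_id.sub continuous_const).norm.pow 4).mul (cont_bub.pow 2)).mul hfcont)
  have hgT : IntegrableOn g T := integrableOn_T hgcont
  have hgB : IntegrableOn g B := integrableOn_ball hgcont aa (1/16)
  have hfB : IntegrableOn f B := integrableOn_ball hfcont aa (1/16)
  -- pointwise bound on B
  have hpt : ∀ x ∈ B, w * f x ≤ g x := by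
    intro x hx
    have hn : (1/16 : ℝ) ≤ ‖x - x₀‖ := by
      have ht := dist_triangle aa x x₀
      have hxn : dist aa x < 1/16 := by
        rw [dist_comm]; exact Metric.mem_ball.mp hx
      rw [← dist_eq_norm]
      rw [show dist x x₀ = dist x x₀ from rfl]
      linarith [ht, hxn, hx₀]
    have hb := hbub x hx
    have h1 : ((1/16 : ℝ))^4 ≤ ‖x - x₀‖^4 := pow_le_pow_left₀ (by norm_num) hn 4
    have h2 : ((486/4096 : ℝ))^2 ≤ (bub x)^2 :=
      pow_le_pow_left₀ (by norm_num) hb 2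
    have h3 : w ≤ ‖x - x₀‖^4 * (bub x)^2 := by
      calc w = (1/16:ℝ)^4 * (486/4096)^2 := hw
        _ ≤ ‖x - x₀‖^4 * (bub x)^2 := by
            apply mul_le_mul h1 h2 (by norm_num) (by positivity)
    have hfx : 0 ≤ f x := sq_nonneg _
    calc w * f x ≤ (‖x - x₀‖^4 * (bub x)^2) * f x := mul_le_mul_of_nonneg_right h3 hfx
      _ = g x := by rw [hg]
  -- integral chain
  have step1 : w * ∫ x in B, f x ≤ ∫ x in B, g x := by
    rw [← integral_const_mul]
    exact setIntegral_mono_on (hfB.const_mul w) hgB measurableSet_ball hpt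
  have step2 : ∫ x in B, g x ≤ ∫ x in T, g x := by
    apply setIntegral_mono_set hgT
    · filter_upwards with x using by
        rw [hg]; positivity
    · exact HasSubset.Subset.eventuallyLE hball
  have step3 := hA p hp
  have hfB_le : ∫ x in B, f x ≤ (1/w) * ∫ x in T, g x := by
    have h : w * ∫ x in B, f x ≤ ∫ x in T, g x := le_trans step1 step2
    rw [show (1/w) * ∫ x in T, g x = (∫ x in T, g x) / w by ring, le_div_iff₀ hw0]
    linarith [h]
  calc (∫ x in T, f x) ≤ c * ∫ x in B, f x := step3
    _ ≤ c * ((1/w) * ∫ x in T, g x) := mul_le_mul_of_nonneg_left hfB_le hc.le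
    _ = (c / w) * ∫ x in T, g x := by ring

end

/-- Norm equivalence for the modified bubble function vanishing at the Dirac point:
for every `m` there is `C > 0`, independent of `x₀ ∈ T`, such that for all polynomials
`p` of total degree at most `m`,
`∫_T p² ≤ C ∫_T ‖x − x₀‖⁴ b(x)² p(x)² dx`. -/
theorem modified_bubble_norm_equivalence (m : ℕ) :
    ∃ C > 0, ∀ x₀ ∈ T, ∀ p : MvPolynomial (Fin 2) ℝ, p.totalDegree ≤ m →
      (∫ x in T, (MvPolynomial.eval (fun i => x i) p) ^ 2) ≤
        C * ∫ x in T, ‖x - x₀‖ ^ 4 * (bub x) ^ 2 * (MvPolynomial.eval (fun i => x i) p) ^ 2 := by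
  obtain ⟨c₁, hc₁, h₁⟩ := lemA m pa1 (1/16) (by norm_num)
  obtain ⟨c₂, hc₂, h₂⟩ := lemA m pa2 (1/16) (by norm_num)
  set w : ℝ := (1/16 : ℝ)^4 * (486/4096)^2 with hw
  have hw0 : 0 < w := by norm_num [hw]
  refine ⟨max c₁ c₂ / w, by positivity, ?_⟩
  intro x₀ hx₀ p hp
  have hInn : 0 ≤ ∫ x in T, ‖x - x₀‖ ^ 4 * (bub x) ^ 2 * (eval (fun i => x i) p) ^ 2 := by
    apply setIntegral_nonneg T_isClosed.measurableSet
    intro x _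
    positivity
  rcases choice_pa x₀ with hch | hch
  · calc (∫ x in T, (eval (fun i => x i) p) ^ 2)
        ≤ (c₁ / w) * ∫ x in T, ‖x - x₀‖ ^ 4 * (bub x) ^ 2 * (eval (fun i => x i) p) ^ 2 :=
          main_aux m pa1 c₁ hc₁ ball1_sub bub1_lb h₁ x₀ hch p hp
      _ ≤ (max c₁ c₂ / w) * ∫ x in T, ‖x - x₀‖ ^ 4 * (bub x) ^ 2 * (eval (fun i => x i) p) ^ 2 := by
          apply mul_le_mul_of_nonneg_right _ hInn
          exact (div_le_div_iff_of_pos_right hw0).mpr (le_max_left _ _)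
  · calc (∫ x in T, (eval (fun i => x i) p) ^ 2)
        ≤ (c₂ / w) * ∫ x in T, ‖x - x₀‖ ^ 4 * (bub x) ^ 2 * (eval (fun i => x i) p) ^ 2 :=
          main_aux m pa2 c₂ hc₂ ball2_sub bub2_lb h₂ x₀ hch p hp
      _ ≤ (max c₁ c₂ / w) * ∫ x in T, ‖x - x₀‖ ^ 4 * (bub x) ^ 2 * (eval (fun i => x i) p) ^ 2 := by
          apply mul_le_mul_of_nonneg_right _ hInn
          exact (div_le_div_iff_of_pos_right hw0).mpr (le_max_right _ _)
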